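/- Let G be a square-stable graph and v a vertex of G. Then v belongs to every maximum stable set of G² if and only if v is a simplicial vertex of G that is the unique simplicial vertex in its simplex (i.e., no neighbor of v is simplicial). -/

import Mathlib

open SimpleGraph

/-- The square of a graph: vertices adjacent iff at distance 1 or 2 in `G`. -/
def SimpleGraph.sq {V : Type*} (G : SimpleGraph V) : SimpleGraph V where
  Adj u v := G.Adj u v ∨ (u ≠ v ∧ ∃ w, G.Adj u w ∧ G.Adj w v)
  symm := by
    constructor
    rintro u v (h | ⟨hne, w, h1, h2⟩)
    · exact Or.inl h.symm
    · exact Or.inr ⟨hne.symm, w, h2.symm, h1.symm⟩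
  loopless := by
    constructor
    rintro u (h | ⟨hne, _⟩)
    · exact G.irrefl h
    · exact hne rfl

/-- A stable (independent) set of vertices. -/
def SimpleGraph.IsStableSet {V : Type*} (G : SimpleGraph V) (s : Set V) : Prop :=
  s.Pairwise fun u v => ¬ G.Adj u v

/-- The stability (independence) number. -/
noncomputable def SimpleGraph.alpha {V : Type*} (G : SimpleGraph V) : ℕ :=
  sSup {n | ∃ s : Finset V, G.IsStableSet ↑s ∧ s.card = n}

/-- The matching number: maximum number of edges in a matching. -/
noncomputable def SimpleGraph.mu {V : Type*} (G : SimpleGraph V) : ℕ :=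
  sSup {n | ∃ M : G.Subgraph, M.IsMatching ∧ M.edgeSet.ncard = n}

/-- `s` is a maximum stable set. -/
def SimpleGraph.IsMaximumStable {V : Type*} (G : SimpleGraph V) (s : Finset V) : Prop :=
  G.IsStableSet ↑s ∧ s.card = G.alpha

/-- `s` is a maximal stable set. -/
def SimpleGraph.IsMaximalStable {V : Type*} (G : SimpleGraph V) (s : Finset V) : Prop :=
  G.IsStableSet ↑s ∧ ∀ v ∉ s, ¬ G.IsStableSet (insert v (↑s : Set V))

/-- `G` is square-stable if `α(G) = α(G²)`. -/
def SimpleGraph.SquareStable {V : Type*} (G : SimpleGraph V) : Prop :=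
  G.alpha = G.sq.alpha

/-- König-Egerváry graph: `α(G) + μ(G) = |V(G)|`. -/
def SimpleGraph.KonigEgervary {V : Type*} [Fintype V] (G : SimpleGraph V) : Prop :=
  G.alpha + G.mu = Fintype.card V

/-- A pendant vertex: a vertex of degree 1. -/
def SimpleGraph.Pendant {V : Type*} (G : SimpleGraph V) (v : V) : Prop :=
  (G.neighborSet v).ncard = 1

/-- `G` has a perfect matching consisting of pendant edges. -/
def SimpleGraph.HasPendantPerfectMatching {V : Type*} (G : SimpleGraph V) : Prop :=
  ∃ M : G.Subgraph, M.IsPerfectMatching ∧ ∀ e ∈ M.edgeSet, ∃ v ∈ e, G.Pendant v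

/-- A simplicial vertex: its neighborhood induces a clique. -/
def SimpleGraph.IsSimplicial {V : Type*} (G : SimpleGraph V) (v : V) : Prop :=
  G.IsClique (G.neighborSet v)

/-- `G` is well-covered: every maximal stable set is maximum. -/
def SimpleGraph.WellCovered {V : Type*} (G : SimpleGraph V) : Prop :=
  ∀ s : Finset V, G.IsMaximalStable s → s.card = G.alpha

/-- `G` is very well-covered: well-covered, no isolated vertices, `|V| = 2α`. -/
def SimpleGraph.VeryWellCovered {V : Type*} [Fintype V] (G : SimpleGraph V) : Prop :=
  G.WellCovered ∧ (∀ v : V, (G.neighborSet v).ncard ≠ 0) ∧ Fintype.card V = 2 * G.alpha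


section Helpers

variable {V : Type*} [Fintype V] [DecidableEq V] {G : SimpleGraph V}

private lemma stable_bdd (G : SimpleGraph V) :
    BddAbove {n | ∃ s : Finset V, G.IsStableSet ↑s ∧ s.card = n} := by
  refine ⟨Fintype.card V, ?_⟩
  rintro n ⟨s, -, rfl⟩
  exact s.card_le_univ

private lemma card_le_alpha {s : Finset V} (h : G.IsStableSet ↑s) : s.card ≤ G.alpha :=
  le_csSup (stable_bdd G) ⟨s, h, rfl⟩

private lemma exists_max_stable (G : SimpleGraph V) : ∃ s : Finset V, G.IsMaximumStable s := by
  have h := Nat.sSup_mem (s := {n | ∃ s : Finset V, G.IsStableSet ↑s ∧ s.card = n})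
    ⟨0, ∅, by simp [SimpleGraph.IsStableSet], by simp⟩ (stable_bdd G)
  obtain ⟨s, hs, hcard⟩ := h
  exact ⟨s, hs, hcard⟩

private lemma stable_of_sq {s : Set V} (h : G.sq.IsStableSet s) : G.IsStableSet s :=
  fun x hx y hy hxy hadj => h hx hy hxy (Or.inl hadj)

/-- Every vertex of a maximum stable set of `G²` is simplicial (needs square-stability). -/
private lemma mem_simplicial (hss : G.SquareStable) {S : Finset V}
    (hS : G.sq.IsMaximumStable S) {u : V} (hu : u ∈ S) : G.IsSimplicial u := by
  have hGst : G.IsStableSet ↑S := stable_of_sq hS.1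
  intro a ha b hb hab
  rw [SimpleGraph.mem_neighborSet] at ha hb
  by_contra hadj
  -- neighbors of members of S are not in S and not adjacent to other members of S
  have key : ∀ c, G.Adj u c → c ∉ S ∧ ∀ w ∈ S, w ≠ u → ¬ G.Adj c w ∧ c ≠ w := by
    intro c hc
    have hcS : c ∉ S := by
      intro hcmem
      exact hGst (Finset.mem_coe.mpr hu) (Finset.mem_coe.mpr hcmem) hc.ne hc
    refine ⟨hcS, fun w hw hwu => ⟨?_, ?_⟩⟩
    · intro hcw
      exact hS.1 (Finset.mem_coe.mpr hu) (Finset.mem_coe.mpr hw) (Ne.symm hwu)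
        (Or.inr ⟨Ne.symm hwu, c, hc, hcw⟩)
    · rintro rfl; exact hcS hw
  obtain ⟨haS, hka⟩ := key a ha
  obtain ⟨hbS, hkb⟩ := key b hb
  set T : Finset V := insert a (insert b (S.erase u)) with hT
  have hTst : G.IsStableSet ↑T := by
    intro x hx y hy hxy
    simp only [hT, Finset.coe_insert, Set.mem_insert_iff, Finset.mem_coe,
      Finset.mem_erase] at hx hy
    rcases hx with rfl | rfl | ⟨hxu, hxS⟩ <;> rcases hy with rfl | rfl | ⟨hyu, hyS⟩
    · exact absurd rfl hxy
    · exact hadj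
    · exact (hka y hyS hyu).1
    · exact fun h => hadj h.symm
    · exact absurd rfl hxy
    · exact (hkb y hyS hyu).1
    · exact fun h => (hka x hxS hxu).1 h.symm
    · exact fun h => (hkb x hxS hxu).1 h.symm
    · exact hGst (Finset.mem_coe.mpr hxS) (Finset.mem_coe.mpr hyS) hxy
  have hcard : T.card = S.card + 1 := by
    have h1 : a ∉ insert b (S.erase u) := by
      simp only [Finset.mem_insert, Finset.mem_erase]
      push_neg
      exact ⟨hab, fun _ => haS⟩
    have h2 : b ∉ S.erase u := fun h => hbS (Finset.mem_of_mem_erase h)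
    have h3 : 1 ≤ S.card := Finset.card_pos.mpr ⟨u, hu⟩
    rw [hT, Finset.card_insert_of_notMem h1, Finset.card_insert_of_notMem h2,
      Finset.card_erase_of_mem hu]
    omega
  have hle : T.card ≤ G.alpha := card_le_alpha hTst
  rw [hcard, hss, hS.2] at hle
  omega

/-- A maximum stable set of `G²` dominates `G` (needs square-stability). -/
private lemma exists_adj_of_not_mem (hss : G.SquareStable) {S : Finset V}
    (hS : G.sq.IsMaximumStable S) {v : V} (hv : v ∉ S) : ∃ u ∈ S, G.Adj v u := by
  have hGst : G.IsStableSet ↑S := stable_of_sq hS.1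
  by_contra h
  push_neg at h
  have hst : G.IsStableSet ↑(insert v S) := by
    intro x hx y hy hxy
    simp only [Finset.coe_insert, Set.mem_insert_iff, Finset.mem_coe] at hx hy
    rcases hx with rfl | hxS <;> rcases hy with rfl | hyS
    · exact absurd rfl hxy
    · exact h y hyS
    · exact fun hadj => h x hxS hadj.symm
    · exact hGst (Finset.mem_coe.mpr hxS) (Finset.mem_coe.mpr hyS) hxy
  have hle : (insert v S).card ≤ G.alpha := card_le_alpha hst
  rw [Finset.card_insert_of_notMem hv, hss, hS.2] at hle
  omega

/-- Swapping a member `v` for a simplicial neighbor `u` preserves maximum stability in `G²`. -/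
private lemma swap_simplicial {S : Finset V} (hS : G.sq.IsMaximumStable S)
    {v u : V} (hv : v ∈ S) (hu : G.Adj v u) (husimp : G.IsSimplicial u) :
    G.sq.IsMaximumStable (insert u (S.erase v)) ∧ v ∉ insert u (S.erase v) := by
  have hGst : G.IsStableSet ↑S := stable_of_sq hS.1
  have huS : u ∉ S := fun h =>
    hGst (Finset.mem_coe.mpr hv) (Finset.mem_coe.mpr h) hu.ne hu
  have keyu : ∀ w ∈ S, w ≠ v → ¬ G.sq.Adj u w := by
    intro w hw hwv hsq
    have hvw : v ≠ w := Ne.symm hwv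
    rcases hsq with huw | ⟨-, x, hux, hxw⟩
    · exact hS.1 (Finset.mem_coe.mpr hv) (Finset.mem_coe.mpr hw) hvw
        (Or.inr ⟨hvw, u, hu, huw⟩)
    · rcases eq_or_ne x v with rfl | hxv
      · exact hGst (Finset.mem_coe.mpr hv) (Finset.mem_coe.mpr hw) hvw hxw
      · have hxv' : G.Adj x v :=
          husimp ((G.mem_neighborSet u x).mpr hux)
            ((G.mem_neighborSet u v).mpr hu.symm) hxv
        exact hS.1 (Finset.mem_coe.mpr hv) (Finset.mem_coe.mpr hw) hvw
          (Or.inr ⟨hvw, x, hxv'.symm, hxw⟩)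
  refine ⟨⟨?_, ?_⟩, ?_⟩
  · intro x hx y hy hxy
    simp only [Finset.coe_insert, Set.mem_insert_iff, Finset.mem_coe,
      Finset.mem_erase] at hx hy
    rcases hx with rfl | ⟨hxv, hxS⟩ <;> rcases hy with rfl | ⟨hyv, hyS⟩
    · exact absurd rfl hxy
    · exact keyu y hyS hyv
    · exact fun h => keyu x hxS hxv h.symm
    · exact hS.1 (Finset.mem_coe.mpr hxS) (Finset.mem_coe.mpr hyS) hxy
  · have h1 : u ∉ S.erase v := fun h => huS (Finset.mem_of_mem_erase h)
    rw [Finset.card_insert_of_notMem h1, Finset.card_erase_of_mem hv, ← hS.2]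
    have : 1 ≤ S.card := Finset.card_pos.mpr ⟨v, hv⟩
    omega
  · simp only [Finset.mem_insert, Finset.mem_erase]
    push_neg
    exact ⟨hu.ne, fun h => absurd rfl h⟩

end Helpers

theorem stmt8 {V : Type*} [Fintype V] (G : SimpleGraph V) (hc : G.Connected)
    (hss : G.SquareStable) (v : V) :
    (∀ s : Finset V, G.sq.IsMaximumStable s → v ∈ s) ↔
      (G.IsSimplicial v ∧ ∀ u ∈ G.neighborSet v, ¬ G.IsSimplicial u) := by
  classical
  constructor
  · intro h
    obtain ⟨S, hS⟩ := exists_max_stable G.sq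
    have hvS : v ∈ S := h S hS
    refine ⟨mem_simplicial hss hS hvS, ?_⟩
    intro u hu husimp
    rw [SimpleGraph.mem_neighborSet] at hu
    obtain ⟨hS', hvS'⟩ := swap_simplicial hS hvS hu husimp
    exact hvS' (h _ hS')
  · rintro ⟨hsimp, hns⟩ S hS
    by_contra hv
    obtain ⟨u, huS, hadj⟩ := exists_adj_of_not_mem hss hS hv
    exact hns u ((G.mem_neighborSet v u).mpr hadj) (mem_simplicial hss hS huS)
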